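/- Let 𝕊 ⊆ ℝ^ℓ (ℓ ≥ 2) be a state space, let D : ℝ^ℓ → ℝⁿ be a linear map, and let A ⊆ (ker D)^⊥ be a nonempty bounded set contained in the support of D. Then the image under D of the data-driven inference of A equals the data-driven inference of the image: {D(Y) : Y ∈ ddi(A | 𝕊)} = ddi(D(A) | 𝕊), where D(Y) = {D y : y ∈ Y}. -/

import Mathlib

open MeasureTheory Metric Set

noncomputable section

/-- `Euc n` is the Euclidean space `ℝⁿ`. -/
abbrev Euc (n : ℕ) : Type := EuclideanSpace ℝ (Fin n)

/-- A state space of linear dimension `ℓ`: a compact convex set contained in (and affinely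
spanning) an affine hyperplane not through the origin, here written as `{x | f x = 1}`
for a nonzero linear functional `f`. -/
def IsStateSpace {ℓ : ℕ} (𝕊 : Set (Euc ℓ)) : Prop :=
  IsCompact 𝕊 ∧ Convex ℝ 𝕊 ∧
    ∃ f : Euc ℓ →ₗ[ℝ] ℝ, f ≠ 0 ∧
      (affineSpan ℝ 𝕊 : Set (Euc ℓ)) = {x | f x = 1}

/-- `R` is admissible for the data set `X` (w.r.t. the state space `𝕊`): it is the image of `𝕊`
under some linear map and satisfies `X ⊆ R ⊆ aff X`. -/
def Admissible {ℓ n : ℕ} (𝕊 : Set (Euc ℓ)) (X R : Set (Euc n)) : Prop :=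
  (∃ M : Euc ℓ →ₗ[ℝ] Euc n, R = M '' 𝕊) ∧ X ⊆ R ∧ R ⊆ (affineSpan ℝ X : Set (Euc n))

/-- Data-driven inference: the admissible sets for `X` of minimal `d`-dimensional Hausdorff
measure, where `d = dim aff X`. -/
def ddi {ℓ n : ℕ} (X : Set (Euc n)) (𝕊 : Set (Euc ℓ)) : Set (Set (Euc n)) :=
  {R | Admissible 𝕊 X R ∧ ∀ R' : Set (Euc n), Admissible 𝕊 X R' →
      μH[(Module.finrank ℝ (affineSpan ℝ X).direction : ℝ)] R ≤
        μH[(Module.finrank ℝ (affineSpan ℝ X).direction : ℝ)] R'}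

/-- A (hyper)-ellipsoid state space in `ℝ^ℓ`: the image of the closed unit ball of `ℝ^(ℓ-1)`
under an injective affine map. -/
def IsHyperEllipsoid {ℓ : ℕ} (𝕊 : Set (Euc ℓ)) : Prop :=
  ∃ F : Euc (ℓ - 1) →ᵃ[ℝ] Euc ℓ, Function.Injective F ∧ 𝕊 = F '' closedBall 0 1

open scoped ENNReal Pointwise

/-- A linear map that is injective on a subspace `W` scales the `dim W`-dimensional Hausdorff
measure of subsets of `W` by a fixed nonzero finite constant. -/
lemma ddi_aux_scale {ℓ n : ℕ} (D : Euc ℓ →ₗ[ℝ] Euc n) (W : Submodule ℝ (Euc ℓ))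
    (hinj : ∀ x ∈ W, D x = 0 → x = 0) :
    ∃ c : ℝ≥0∞, c ≠ 0 ∧ c ≠ ⊤ ∧ ∀ S ⊆ (W : Set (Euc ℓ)),
      μH[(Module.finrank ℝ W : ℝ)] (D '' S) = c * μH[(Module.finrank ℝ W : ℝ)] S := by
  classical
  set d := Module.finrank ℝ W with hd
  set DW : W →ₗ[ℝ] Euc n := D.comp W.subtype with hDW
  have hinj' : Function.Injective DW := by
    rw [← LinearMap.ker_eq_bot]
    ext ⟨x, hx⟩
    simp only [LinearMap.mem_ker, Submodule.mem_bot, hDW, LinearMap.comp_apply,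
      Submodule.coe_subtype, Submodule.mk_eq_zero]
    exact ⟨fun h => hinj x hx h, fun h => by rw [h]; exact map_zero D⟩
  set W' := LinearMap.range DW with hW'
  set eW : W ≃ₗ[ℝ] W' := LinearEquiv.ofInjective DW hinj' with heW
  have hd' : Module.finrank ℝ W' = d := (eW.finrank_eq).symm
  set g : W ≃ₗᵢ[ℝ] Euc d := (stdOrthonormalBasis ℝ W).repr with hg
  set g' : W' ≃ₗᵢ[ℝ] Euc d := ((stdOrthonormalBasis ℝ W').reindex (finCongr hd')).repr with hg'
  set T : Euc d ≃ₗ[ℝ] Euc d := g.symm.toLinearEquiv ≪≫ₗ eW ≪≫ₗ g'.toLinearEquiv with hT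
  set c : ℝ≥0∞ := ENNReal.ofReal |LinearMap.det (T : Euc d →ₗ[ℝ] Euc d)| with hc
  have hc0 : c ≠ 0 := by
    simp only [hc, ne_eq, ENNReal.ofReal_eq_zero, not_le, abs_pos]
    exact (LinearEquiv.isUnit_det' T).ne_zero
  have hctop : c ≠ ⊤ := ENNReal.ofReal_ne_top
  have hd0 : (0:ℝ) ≤ (d:ℝ) := Nat.cast_nonneg d
  have hμ : ∀ s : Set (Euc d),
      μH[(d:ℝ)] ((T : Euc d →ₗ[ℝ] Euc d) '' s) = c * μH[(d:ℝ)] s := by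
    intro s
    have h1 : (μH[(d:ℝ)] : Measure (Euc d)) = μH[(Module.finrank ℝ (Euc d) : ℝ)] := by
      rw [finrank_euclideanSpace_fin]
    rw [h1]
    exact Measure.addHaar_image_linearMap _ _ s
  refine ⟨c, hc0, hctop, fun S hS => ?_⟩
  set Sw : Set W := Subtype.val ⁻¹' S with hSw
  have hSval : Subtype.val '' Sw = S := by
    rw [hSw, Set.image_preimage_eq_inter_range, Subtype.range_coe]
    exact inter_eq_self_of_subset_left hS
  have key : ∀ w : W, ((g'.symm (T (g w)) : W') : Euc n) = D (w : Euc ℓ) := by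
    intro w
    simp only [hT, LinearEquiv.trans_apply, LinearIsometryEquiv.coe_toLinearEquiv,
      LinearIsometryEquiv.symm_apply_apply, LinearEquiv.ofInjective_apply, hDW,
      LinearMap.comp_apply, Submodule.coe_subtype]
    rfl
  calc μH[(d:ℝ)] (D '' S)
      = μH[(d:ℝ)] ((Subtype.val : W' → Euc n) ''
          (g'.symm '' ((T : Euc d →ₗ[ℝ] Euc d) '' (g '' Sw)))) := by
        congr 1
        rw [← hSval, image_image, image_image, image_image, image_image]
        exact image_congr (fun w _ => (key w).symm)
    _ = μH[(d:ℝ)] (g'.symm '' ((T : Euc d →ₗ[ℝ] Euc d) '' (g '' Sw))) :=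
        W'.subtypeₗᵢ.isometry.hausdorffMeasure_image (Or.inl hd0) _
    _ = μH[(d:ℝ)] ((T : Euc d →ₗ[ℝ] Euc d) '' (g '' Sw)) :=
        g'.symm.isometry.hausdorffMeasure_image (Or.inl hd0) _
    _ = c * μH[(d:ℝ)] (g '' Sw) := hμ _
    _ = c * μH[(d:ℝ)] Sw := by rw [g.isometry.hausdorffMeasure_image (Or.inl hd0)]
    _ = c * μH[(d:ℝ)] S := by
        rw [← hSval]
        exact congrArg (fun m => c * m)
          (W.subtypeₗᵢ.isometry.hausdorffMeasure_image (Or.inl hd0) Sw).symm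

/-- Affine version of `ddi_aux_scale`: a linear map injective on the direction of `aff A`
scales the Hausdorff measure of subsets of `aff A` by a fixed nonzero finite constant. -/
lemma ddi_aux_scale_affine {ℓ n : ℕ} (D : Euc ℓ →ₗ[ℝ] Euc n) (A : Set (Euc ℓ))
    (hne : A.Nonempty)
    (hinj : ∀ x ∈ (affineSpan ℝ A).direction, D x = 0 → x = 0) :
    ∃ c : ℝ≥0∞, c ≠ 0 ∧ c ≠ ⊤ ∧ ∀ S ⊆ (affineSpan ℝ A : Set (Euc ℓ)),
      μH[(Module.finrank ℝ (affineSpan ℝ A).direction : ℝ)] (D '' S)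
        = c * μH[(Module.finrank ℝ (affineSpan ℝ A).direction : ℝ)] S := by
  obtain ⟨c, hc0, hctop, hc⟩ := ddi_aux_scale D (affineSpan ℝ A).direction hinj
  set d := Module.finrank ℝ (affineSpan ℝ A).direction with hd
  have hd0 : (0:ℝ) ≤ (d:ℝ) := Nat.cast_nonneg d
  obtain ⟨p, hpA⟩ := hne
  have hp : p ∈ affineSpan ℝ A := subset_affineSpan ℝ A hpA
  refine ⟨c, hc0, hctop, fun S hS => ?_⟩
  set S₀ : Set (Euc ℓ) := (-p) +ᵥ S with hS₀def
  have hS₀ : S₀ ⊆ ((affineSpan ℝ A).direction : Set (Euc ℓ)) := by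
    rintro x ⟨s, hs, rfl⟩
    have h := AffineSubspace.vsub_mem_direction (hS hs) hp
    simpa [neg_add_eq_sub] using h
  have hSrec : S = p +ᵥ S₀ := by
    rw [hS₀def, vadd_vadd]
    simp
  have himg : D '' S = D p +ᵥ (D '' S₀) := by
    rw [hSrec, ← Set.image_vadd, Set.image_image, ← Set.image_vadd, Set.image_image]
    simp [map_add]
  rw [himg, MeasureTheory.hausdorffMeasure_vadd _ (Or.inl hd0),
    hc S₀ hS₀]
  congr 1
  rw [MeasureTheory.hausdorffMeasure_vadd _ (Or.inl hd0)]

theorem stmt_12 {ℓ n : ℕ} (hℓ : 2 ≤ ℓ) (𝕊 : Set (Euc ℓ)) (hS : IsStateSpace 𝕊)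
    (D : Euc ℓ →ₗ[ℝ] Euc n) (A : Set (Euc ℓ)) (hne : A.Nonempty)
    (hbd : Bornology.IsBounded A)
    (hsub : A ⊆ ((LinearMap.ker D)ᗮ : Set (Euc ℓ))) :
    (fun Y : Set (Euc ℓ) => D '' Y) '' ddi A 𝕊 = ddi (D '' A) 𝕊 := by
  classical
  set V : Submodule ℝ (Euc ℓ) := (LinearMap.ker D)ᗮ with hV
  -- injectivity on V
  have hinjV : ∀ x ∈ V, D x = 0 → x = 0 := by
    intro x hx hDx
    have : x ∈ LinearMap.ker D ⊓ V := ⟨LinearMap.mem_ker.mpr hDx, hx⟩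
    rwa [Submodule.inf_orthogonal_eq_bot (LinearMap.ker D), Submodule.mem_bot] at this
  -- the affine span of A lies in V
  have hAspan : (affineSpan ℝ A : Set (Euc ℓ)) ⊆ (V : Set (Euc ℓ)) := by
    have hle : affineSpan ℝ A ≤ V.toAffineSubspace := by
      rw [affineSpan_le]
      intro x hx
      exact (Submodule.mem_toAffineSubspace).mpr (hsub hx)
    intro x hx
    exact (Submodule.mem_toAffineSubspace).mp (hle hx)
  set W : Submodule ℝ (Euc ℓ) := (affineSpan ℝ A).direction with hW
  have hWV : W ≤ V := by
    have h1 : affineSpan ℝ A ≤ V.toAffineSubspace := by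
      rw [affineSpan_le]; intro x hx; exact (Submodule.mem_toAffineSubspace).mpr (hsub hx)
    have := AffineSubspace.direction_le h1
    rwa [Submodule.toAffineSubspace_direction] at this
  have hinjW : ∀ x ∈ W, D x = 0 → x = 0 := fun x hx => hinjV x (hWV hx)
  -- the span of the image
  have hspanD : (affineSpan ℝ (D '' A) : Set (Euc n)) = D '' (affineSpan ℝ A : Set (Euc ℓ)) := by
    have h := AffineSubspace.map_span D.toAffineMap A
    rw [show ⇑D.toAffineMap '' A = D '' A from by rw [LinearMap.coe_toAffineMap]] at h
    rw [← h, AffineSubspace.coe_map, LinearMap.coe_toAffineMap]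
  -- dimension is preserved
  have hdir : (affineSpan ℝ (D '' A)).direction = W.map D := by
    have h := AffineSubspace.map_span D.toAffineMap A
    rw [show ⇑D.toAffineMap '' A = D '' A from by rw [LinearMap.coe_toAffineMap]] at h
    rw [← h, AffineSubspace.map_direction, LinearMap.toAffineMap_linear]
  have hWinj : Function.Injective (D.comp W.subtype) := by
    rw [← LinearMap.ker_eq_bot]
    ext ⟨x, hx⟩
    simp only [LinearMap.mem_ker, Submodule.mem_bot, LinearMap.comp_apply,
      Submodule.coe_subtype, Submodule.mk_eq_zero]
    exact ⟨fun h => hinjW x hx h, fun h => by rw [h]; exact map_zero D⟩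
  have hfr : Module.finrank ℝ (affineSpan ℝ (D '' A)).direction = Module.finrank ℝ W := by
    rw [hdir, show W.map D = LinearMap.range (D.comp W.subtype) from by
      rw [LinearMap.range_comp, Submodule.range_subtype]]
    exact ((LinearEquiv.ofInjective _ hWinj).finrank_eq).symm
  -- the pseudo-inverse Q of D on V
  set D₀ : V →ₗ[ℝ] Euc n := D.comp V.subtype with hD₀
  have hinj₀ : Function.Injective D₀ := by
    rw [← LinearMap.ker_eq_bot]
    ext ⟨x, hx⟩
    simp only [LinearMap.mem_ker, Submodule.mem_bot, hD₀, LinearMap.comp_apply,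
      Submodule.coe_subtype, Submodule.mk_eq_zero]
    exact ⟨fun h => hinjV x hx h, fun h => by rw [h]; exact map_zero D⟩
  set U : Submodule ℝ (Euc n) := LinearMap.range D₀ with hU
  set e : V ≃ₗ[ℝ] U := LinearEquiv.ofInjective D₀ hinj₀ with he
  set Q : Euc n →ₗ[ℝ] Euc ℓ :=
    V.subtype ∘ₗ e.symm.toLinearMap ∘ₗ (U.orthogonalProjectionOnto).toLinearMap with hQ
  have hDU : ∀ x ∈ V, D x ∈ U := fun x hx => ⟨⟨x, hx⟩, rfl⟩
  have hQD : ∀ x ∈ V, Q (D x) = x := by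
    intro x hx
    show V.subtype (e.symm (U.orthogonalProjectionOnto (D x))) = x
    have h1 : U.orthogonalProjectionOnto (D x) = e ⟨x, hx⟩ := by
      have h2 : D x = ((e ⟨x, hx⟩ : U) : Euc n) := rfl
      rw [h2, Submodule.orthogonalProjection_mem_subspace_eq_self]
    rw [h1, e.symm_apply_apply]
    rfl
  have hDQ : ∀ z ∈ U, D (Q z) = z := by
    intro z hz
    show D (V.subtype (e.symm (U.orthogonalProjectionOnto z))) = z
    have h1 : U.orthogonalProjectionOnto z = ⟨z, hz⟩ := by
      simpa using Submodule.orthogonalProjection_mem_subspace_eq_self (K := U) ⟨z, hz⟩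
    rw [h1]
    have h2 : D (V.subtype (e.symm ⟨z, hz⟩)) = ((e (e.symm ⟨z, hz⟩) : U) : Euc n) := rfl
    rw [h2, e.apply_symm_apply]
  have hspanDU : (affineSpan ℝ (D '' A) : Set (Euc n)) ⊆ (U : Set (Euc n)) := by
    rw [hspanD]
    rintro _ ⟨x, hx, rfl⟩
    exact hDU x (hAspan hx)
  -- transfer of admissibility
  have fwd : ∀ Y, Admissible 𝕊 A Y → Admissible 𝕊 (D '' A) (D '' Y) := by
    rintro Y ⟨⟨M, rfl⟩, hAY, hYspan⟩
    refine ⟨⟨D ∘ₗ M, by rw [LinearMap.coe_comp, Set.image_comp]⟩, image_mono (f := D) hAY, ?_⟩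
    rw [hspanD]
    exact image_mono (f := D) hYspan
  have bwd : ∀ R, Admissible 𝕊 (D '' A) R → Admissible 𝕊 A (Q '' R) ∧ D '' (Q '' R) = R := by
    rintro R ⟨⟨M, rfl⟩, hAR, hRspan⟩
    have hRU : ∀ z ∈ ⇑M '' 𝕊, z ∈ U := fun z hz => hspanDU (hRspan hz)
    constructor
    · refine ⟨⟨Q ∘ₗ M, by rw [Set.image_image]; rfl⟩, ?_, ?_⟩
      · intro a ha
        exact ⟨D a, hAR (mem_image_of_mem D ha), hQD a (hsub ha)⟩
      · rintro _ ⟨z, hz, rfl⟩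
        have hzspan := hRspan hz
        rw [hspanD] at hzspan
        obtain ⟨x, hx, rfl⟩ := hzspan
        rwa [hQD x (hAspan hx)]
    · rw [Set.image_image]
      rw [Set.image_congr (fun z hz => hDQ z (hRU z hz))]
      exact Set.image_id _
  -- the scaling constant
  obtain ⟨c, hc0, hctop, hscale⟩ := ddi_aux_scale_affine D A hne hinjW
  -- conclusion
  ext R
  simp only [mem_image, ddi, mem_setOf_eq]
  constructor
  · rintro ⟨Y, ⟨hYadm, hYmin⟩, rfl⟩
    refine ⟨fwd Y hYadm, ?_⟩
    intro R' hR'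
    obtain ⟨hY'adm, hDY'⟩ := bwd R' hR'
    rw [hfr, ← hDY', hscale _ hYadm.2.2, hscale _ hY'adm.2.2]
    exact mul_le_mul_right (hYmin _ hY'adm) c
  · rintro ⟨hRadm, hRmin⟩
    obtain ⟨hQadm, hDQR⟩ := bwd R hRadm
    refine ⟨Q '' R, ⟨hQadm, ?_⟩, hDQR⟩
    intro Y' hY'
    have h1 := hRmin (D '' Y') (fwd Y' hY')
    rw [hfr, ← hDQR, hscale _ hQadm.2.2, hscale _ hY'.2.2] at h1
    exact (ENNReal.mul_le_mul_iff_right hc0 hctop).mp h1
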